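/- Let ‖P_{G(s)} f‖ denote the norm of the orthogonal projection of f onto the span G(s) of distinct unit-norm dictionary elements g_1,...,g_s with pairwise inner products bounded in absolute value by M, where M(s-1) < 1. Then ‖P_{G(s)} f‖ = max over ψ ∈ G(s) with ‖ψ‖ ≤ 1 of |⟨f, ψ⟩|, and in particular ‖P_{G(s)} f‖² ≥ (1+M(s-1))^{-1} ∑_{i=1}^s ⟨f, g_i⟩², obtained by testing against ψ = ∑_i ⟨f,g_i⟩ g_i / ((1+M(s-1))^{1/2} (∑_i ⟨f,g_i⟩²)^{1/2}). -/

import Mathlib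

open scoped RealInnerProductSpace BigOperators

noncomputable instance spanRangeFin.finiteDimensional
    {H : Type*} [NormedAddCommGroup H] [InnerProductSpace ℝ H]
    {s : ℕ} (g : Fin s → H) :
    FiniteDimensional ℝ (Submodule.span ℝ (Set.range g)) :=
  FiniteDimensional.span_of_finite ℝ (Set.finite_range g)

lemma inner_eq_inner_proj_aux
    {H : Type*} [NormedAddCommGroup H] [InnerProductSpace ℝ H]
    (K : Submodule ℝ H) [K.HasOrthogonalProjection] (f ψ : H) (hψ : ψ ∈ K) :
    ⟪f, ψ⟫ = ⟪(Submodule.orthogonalProjection K f : H), ψ⟫ := by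
  have h : ⟪f - (Submodule.orthogonalProjection K f : H), ψ⟫ = 0 :=
    Submodule.starProjection_inner_eq_zero f ψ hψ
  rw [inner_sub_left] at h
  linarith

/-- `‖P_{G(s)} f‖` is the maximum of `|⟪f, ψ⟫|` over `ψ` in the unit
ball of `G(s) = span{g₁,…,g_s}`, and in particular
`‖P_{G(s)} f‖² ≥ (1 + M(s-1))⁻¹ ∑ ⟪f, gᵢ⟫²`. -/
theorem projection_norm_as_max_and_lower_bound
    {H : Type*} [NormedAddCommGroup H] [InnerProductSpace ℝ H] [CompleteSpace H]
    (M : ℝ) (s : ℕ) (g : Fin s → H)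
    (hnorm : ∀ i, ‖g i‖ = 1) (hginj : Function.Injective g)
    (hM : ∀ i j, i ≠ j → |⟪g i, g j⟫| ≤ M)
    (hMs : M * (s - 1) < 1) (f : H) :
    IsGreatest
        {x : ℝ | ∃ ψ ∈ Submodule.span ℝ (Set.range g), ‖ψ‖ ≤ 1 ∧ x = |⟪f, ψ⟫|}
        ‖(Submodule.orthogonalProjection (Submodule.span ℝ (Set.range g)) f : H)‖ ∧
      (1 + M * (s - 1))⁻¹ * ∑ i, ⟪f, g i⟫ ^ 2 ≤
        ‖(Submodule.orthogonalProjection (Submodule.span ℝ (Set.range g)) f : H)‖ ^ 2 := by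
  set K := Submodule.span ℝ (Set.range g) with hK
  set Pf : H := (Submodule.orthogonalProjection K f : H) with hPf
  have key : ∀ ψ ∈ K, ⟪f, ψ⟫ = ⟪Pf, ψ⟫ := fun ψ hψ => inner_eq_inner_proj_aux K f ψ hψ
  have hub : ∀ x ∈ {x : ℝ | ∃ ψ ∈ K, ‖ψ‖ ≤ 1 ∧ x = |⟪f, ψ⟫|}, x ≤ ‖Pf‖ := by
    rintro x ⟨ψ, hψ, hψ1, rfl⟩
    rw [key ψ hψ]
    calc |⟪Pf, ψ⟫| ≤ ‖Pf‖ * ‖ψ‖ := abs_real_inner_le_norm _ _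
      _ ≤ ‖Pf‖ * 1 := by
          exact mul_le_mul_of_nonneg_left hψ1 (norm_nonneg _)
      _ = ‖Pf‖ := mul_one _
  have hgreatest : IsGreatest {x : ℝ | ∃ ψ ∈ K, ‖ψ‖ ≤ 1 ∧ x = |⟪f, ψ⟫|} ‖Pf‖ := by
    constructor
    · by_cases h0 : Pf = 0
      · exact ⟨0, K.zero_mem, by simp, by simp [h0]⟩
      · refine ⟨‖Pf‖⁻¹ • Pf, K.smul_mem _ (Submodule.orthogonalProjection K f).2, ?_, ?_⟩
        · rw [norm_smul, norm_inv, norm_norm,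
            inv_mul_cancel₀ (norm_ne_zero_iff.2 h0)]
        · rw [real_inner_smul_right,
            key Pf (Submodule.orthogonalProjection K f).2,
            real_inner_self_eq_norm_sq]
          rw [abs_of_nonneg (by positivity), sq, ← mul_assoc,
            inv_mul_cancel₀ (norm_ne_zero_iff.2 h0), one_mul]
    · exact hub
  refine ⟨hgreatest, ?_⟩
  -- lower bound part
  set c : Fin s → ℝ := fun i => ⟪f, g i⟫ with hc
  set S : ℝ := ∑ i, c i ^ 2 with hS
  by_cases hS0 : S = 0
  · rw [hS0, mul_zero]
    positivity
  have hSpos : 0 < S := by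
    rcases (Finset.sum_nonneg (fun i _ => sq_nonneg (c i))).lt_or_eq with h | h
    · exact h
    · exact absurd h.symm hS0
  -- s ≥ 1
  have hs1 : 1 ≤ s := by
    rcases Nat.eq_zero_or_pos s with h | h
    · exfalso
      apply hS0
      rw [hS]
      apply Finset.sum_eq_zero
      intro i _
      exact absurd i.2 (by omega)
    · exact h
  set ψ₀ : H := ∑ i, c i • g i with hψ₀
  have hψ₀mem : ψ₀ ∈ K :=
    Submodule.sum_mem _ fun i _ =>
      K.smul_mem _ (Submodule.subset_span ⟨i, rfl⟩)
  have hfψ₀ : ⟪f, ψ₀⟫ = S := by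
    rw [hψ₀, inner_sum, hS]
    refine Finset.sum_congr rfl fun i _ => ?_
    rw [real_inner_smul_right]
    ring
  set D : ℝ := 1 + M * (s - 1) with hD
  -- bound on ‖ψ₀‖²
  have hψ₀sq : ‖ψ₀‖ ^ 2 = ∑ i, ∑ j, c i * c j * ⟪g i, g j⟫ := by
    rw [← real_inner_self_eq_norm_sq, hψ₀, sum_inner]
    refine Finset.sum_congr rfl fun i _ => ?_
    rw [inner_sum]
    refine Finset.sum_congr rfl fun j _ => ?_
    rw [real_inner_smul_left, real_inner_smul_right]
    ring
  have hMnn : 1 < s → 0 ≤ M := by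
    intro h2
    have h01 : (⟨0, by omega⟩ : Fin s) ≠ ⟨1, by omega⟩ := by
      simp [Fin.ext_iff]
    exact le_trans (abs_nonneg _) (hM _ _ h01)
  set T : ℝ := ∑ i, |c i| with hT
  have hTsq : T ^ 2 ≤ s * S := by
    have := Finset.sum_mul_sq_le_sq_mul_sq Finset.univ (fun i => |c i|) (fun _ => 1)
    simp only [mul_one, one_pow] at this
    have h1 : ∑ i : Fin s, |c i| ^ 2 = S := by
      rw [hS]; exact Finset.sum_congr rfl fun i _ => sq_abs _
    have h2 : ∑ _i : Fin s, (1 : ℝ) = s := by simp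
    rw [h1, h2] at this
    calc T ^ 2 ≤ S * s := this
      _ = s * S := mul_comm _ _
  have hnormψ₀ : ‖ψ₀‖ ^ 2 ≤ D * S := by
    rw [hψ₀sq]
    have hpt : ∀ i j : Fin s, c i * c j * ⟪g i, g j⟫ ≤
        (if i = j then c i ^ 2 else M * (|c i| * |c j|)) := by
      intro i j
      by_cases h : i = j
      · subst h
        have hgi : ⟪g i, g i⟫ = 1 := by
          rw [real_inner_self_eq_norm_sq, hnorm]; norm_num
        rw [if_pos rfl, hgi]
        exact le_of_eq (by ring)
      · simp only [if_neg h]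
        calc c i * c j * ⟪g i, g j⟫ ≤ |c i * c j * ⟪g i, g j⟫| := le_abs_self _
          _ = |c i| * |c j| * |⟪g i, g j⟫| := by rw [abs_mul, abs_mul]
          _ ≤ |c i| * |c j| * M :=
              mul_le_mul_of_nonneg_left (hM i j h) (by positivity)
          _ = M * (|c i| * |c j|) := by ring
    have hle := Finset.sum_le_sum
      (fun i (_ : i ∈ Finset.univ) => Finset.sum_le_sum
        (fun j (_ : j ∈ Finset.univ) => hpt i j))
    refine le_trans hle ?_
    have hrw : ∀ i j : Fin s,
        (if i = j then c i ^ 2 else M * (|c i| * |c j|)) =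
        M * (|c i| * |c j|) + (if i = j then c i ^ 2 - M * c i ^ 2 else 0) := by
      intro i j
      by_cases h : i = j
      · subst h
        rw [if_pos rfl, if_pos rfl, ← sq_abs (c i)]
        ring
      · simp [h]
    have hsum : ∑ i, ∑ j, (if i = j then c i ^ 2 else M * (|c i| * |c j|)) =
        S + M * (T ^ 2 - S) := by
      simp_rw [hrw, Finset.sum_add_distrib]
      have h1 : ∑ i : Fin s, ∑ j : Fin s, M * (|c i| * |c j|) = M * T ^ 2 := by
        simp_rw [← Finset.mul_sum, ← Finset.sum_mul]
        rw [← hT]; ring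
      have h2 : ∑ i : Fin s, ∑ j : Fin s,
          (if i = j then c i ^ 2 - M * c i ^ 2 else 0) = S - M * S := by
        have : ∀ i : Fin s, ∑ j : Fin s,
            (if i = j then c i ^ 2 - M * c i ^ 2 else 0) = c i ^ 2 - M * c i ^ 2 := by
          intro i
          rw [Finset.sum_ite_eq]
          simp
        simp_rw [this]
        rw [Finset.sum_sub_distrib, ← Finset.mul_sum, ← hS]
      rw [h1, h2]; ring
    rw [hsum]
    rcases eq_or_lt_of_le hs1 with h1 | h2
    · -- s = 1 : T² = S
      have : T ^ 2 = S := by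
        subst h1
        rw [hT, hS, Fin.sum_univ_one, Fin.sum_univ_one, sq_abs]
      rw [this]
      have : (s : ℝ) = 1 := by rw [← h1]; norm_num
      rw [hD, this]
      exact le_of_eq (by ring)
    · have hM0 := hMnn h2
      have : M * (T ^ 2 - S) ≤ M * (s * S - S) := by
        apply mul_le_mul_of_nonneg_left _ hM0
        linarith
      rw [hD]
      nlinarith
  have hDpos : 0 < D := by
    rcases eq_or_lt_of_le hs1 with h1 | h2
    · have : (s : ℝ) = 1 := by rw [← h1]; norm_num
      rw [hD, this]; norm_num
    · have hM0 := hMnn h2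
      have : (1 : ℝ) ≤ (s : ℝ) := by exact_mod_cast hs1
      rw [hD]
      nlinarith
  -- S = ⟪f, ψ₀⟫ = ⟪Pf, ψ₀⟫ ≤ ‖Pf‖ ‖ψ₀‖
  have hSle : S ≤ ‖Pf‖ * ‖ψ₀‖ := by
    rw [← hfψ₀, key ψ₀ hψ₀mem]
    exact real_inner_le_norm _ _
  have hSsq : S ^ 2 ≤ ‖Pf‖ ^ 2 * (D * S) := by
    calc S ^ 2 ≤ (‖Pf‖ * ‖ψ₀‖) ^ 2 := pow_le_pow_left₀ hSpos.le hSle 2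
      _ = ‖Pf‖ ^ 2 * ‖ψ₀‖ ^ 2 := by ring
      _ ≤ ‖Pf‖ ^ 2 * (D * S) :=
          mul_le_mul_of_nonneg_left hnormψ₀ (by positivity)
  rw [inv_mul_le_iff₀ hDpos]
  nlinarith [hSsq, hSpos, hDpos]
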